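/- Let A ∈ ℝ^{m×n} have nonzero columns a_1,…,a_n and rank r = rk(A). Let 0 < ε ≤ 1/(11r) and let v ∈ ℝ^m with ‖v‖ = 1 satisfy â_jᵀv ≥ −ε for all j ∈ [n]. Let T = I_m + vvᵀ and A' = TA. Then T·P_A ⊆ (1+3ε)·P_{A'}, i.e. for every z ∈ P_A one has Tz ∈ (1+3ε)P_{A'}. -/

import Mathlib

open Matrix Set MeasureTheory Pointwise ENNReal

noncomputable section

/-- Euclidean dot product on `Fin d → ℝ`. -/
def dotp {d : ℕ} (u v : Fin d → ℝ) : ℝ := ∑ i, u i * v i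

/-- Euclidean norm on `Fin d → ℝ`. -/
def norm2 {d : ℕ} (v : Fin d → ℝ) : ℝ := Real.sqrt (∑ i, v i ^ 2)

/-- Normalization `v / ‖v‖`, with the convention that `0` is mapped to `0`. -/
def nml {d : ℕ} (v : Fin d → ℝ) : Fin d → ℝ := (norm2 v)⁻¹ • v

/-- The `j`-th column of a matrix. -/
def mcol {d : ℕ} {ι : Type} (A : Matrix (Fin d) ι ℝ) (j : ι) : Fin d → ℝ := fun i => A i j

/-- Goffin's condition measure `ρ_A = max_{y ∈ im(A) \ {0}} min_j â_jᵀ ŷ`. -/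
def goffin {d : ℕ} {ι : Type} [Fintype ι] (A : Matrix (Fin d) ι ℝ) : ℝ :=
  sSup { r : ℝ | ∃ y : Fin d → ℝ, (∃ x : ι → ℝ, A.mulVec x = y) ∧ y ≠ 0 ∧
    r = ⨅ j : ι, dotp (nml (mcol A j)) (nml y) }

/-- The cone `Σ_A = {y : Aᵀ y ≥ 0}`. -/
def SigmaCone {d : ℕ} {ι : Type} (A : Matrix (Fin d) ι ℝ) : Set (Fin d → ℝ) :=
  { y | ∀ j, 0 ≤ dotp (mcol A j) y }

/-- `F_A = Σ_A ∩ B^d`. -/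
def FA {d : ℕ} {ι : Type} (A : Matrix (Fin d) ι ℝ) : Set (Fin d → ℝ) :=
  SigmaCone A ∩ { z | norm2 z ≤ 1 }

/-- `‖v‖_M = √(vᵀ M v)`. -/
def qnorm {d : ℕ} (M : Matrix (Fin d) (Fin d) ℝ) (v : Fin d → ℝ) : ℝ :=
  Real.sqrt (dotp v (M.mulVec v))

/-- The ellipsoid `E(M) = {z : ‖z‖_M ≤ 1}`. -/
def ell {d : ℕ} (M : Matrix (Fin d) (Fin d) ℝ) : Set (Fin d → ℝ) :=
  { z | qnorm M z ≤ 1 }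

/-- The width of a set `X` along `a`: `sup {aᵀz : z ∈ X}`. -/
def widthOf {d : ℕ} (X : Set (Fin d → ℝ)) (a : Fin d → ℝ) : ℝ :=
  sSup { r : ℝ | ∃ z ∈ X, r = dotp a z }

/-- `P_A = conv(â_1,…,â_n) ∩ (−conv(â_1,…,â_n))`. -/
def PA {d : ℕ} {ι : Type} (A : Matrix (Fin d) ι ℝ) : Set (Fin d → ℝ) :=
  convexHull ℝ (Set.range fun j => nml (mcol A j)) ∩
    (-(convexHull ℝ (Set.range fun j => nml (mcol A j))))

/-- `Δ_A`: maximum of `∏_{j ∈ B} ‖a_j‖` over sets `B` of linearly independent columns. -/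
def DeltaA {d n : ℕ} (A : Matrix (Fin d) (Fin n) ℝ) : ℝ :=
  sSup { p : ℝ | ∃ B : Finset (Fin n),
    LinearIndependent ℝ (fun j : {x // x ∈ B} => mcol A j.1) ∧ p = ∏ j ∈ B, norm2 (mcol A j) }

/-- `T*_A`: indices `i` such that some `y` with `Aᵀy ≥ 0` has `a_iᵀ y > 0`. -/
def TstarA {d : ℕ} {ι : Type} (A : Matrix (Fin d) ι ℝ) : Set ι :=
  { i | ∃ y : Fin d → ℝ, (∀ j, 0 ≤ dotp (mcol A j) y) ∧ 0 < dotp (mcol A i) y }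

/-- `S*_A`: indices `i` such that some `x ≥ 0` with `Ax = 0` has `x_i > 0`. -/
def SstarA {d : ℕ} {ι : Type} [Fintype ι] (A : Matrix (Fin d) ι ℝ) : Set ι :=
  { i | ∃ x : ι → ℝ, (∀ j, 0 ≤ x j) ∧ A.mulVec x = 0 ∧ 0 < x i }

/-- `ω_A = min_{i ∈ T*_A} width_{F_A}(â_i)`. -/
def omegaA {d : ℕ} {ι : Type} (A : Matrix (Fin d) ι ℝ) : ℝ :=
  sInf ((fun i => widthOf (FA A) (nml (mcol A i))) '' TstarA A)

section AuxRescale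

lemma dotp_comm' {d : ℕ} (u v : Fin d → ℝ) : dotp u v = dotp v u := by
  simp [dotp, mul_comm]

lemma norm2_nonneg' {d : ℕ} (v : Fin d → ℝ) : 0 ≤ norm2 v := Real.sqrt_nonneg _

lemma norm2_sq' {d : ℕ} (v : Fin d → ℝ) : norm2 v ^ 2 = ∑ i, v i ^ 2 :=
  Real.sq_sqrt (by positivity)

lemma norm2_pos' {d : ℕ} {v : Fin d → ℝ} (hv : v ≠ 0) : 0 < norm2 v := by
  rcases (norm2_nonneg' v).lt_or_eq with h | h
  · exact h
  · exfalso; apply hv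
    have h2 : ∑ i, v i ^ 2 = 0 := by
      have := norm2_sq' v; rw [← h] at this; simpa using this.symm
    funext i
    have := (Finset.sum_eq_zero_iff_of_nonneg (fun i _ => sq_nonneg (v i))).1 h2 i
      (Finset.mem_univ i)
    simpa using pow_eq_zero_iff (n := 2) (by norm_num) |>.1 this

lemma norm2_smul' {d : ℕ} (c : ℝ) (v : Fin d → ℝ) : norm2 (c • v) = |c| * norm2 v := by
  simp only [norm2, Pi.smul_apply, smul_eq_mul, mul_pow, ← Finset.mul_sum]
  rw [Real.sqrt_mul (sq_nonneg c), Real.sqrt_sq_eq_abs]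

lemma norm2_nml' {d : ℕ} {v : Fin d → ℝ} (hv : v ≠ 0) : norm2 (nml v) = 1 := by
  rw [nml, norm2_smul', abs_of_pos (inv_pos.2 (norm2_pos' hv))]
  exact inv_mul_cancel₀ (norm2_pos' hv).ne'

lemma smul_nml' {d : ℕ} {v : Fin d → ℝ} (hv : v ≠ 0) : norm2 v • nml v = v := by
  rw [nml, smul_smul, mul_inv_cancel₀ (norm2_pos' hv).ne', one_smul]

lemma Tmul' {d : ℕ} (v z : Fin d → ℝ) :
    (1 + vecMulVec v v).mulVec z = z + dotp v z • v := by
  funext i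
  have h1 : (vecMulVec v v).mulVec z i = dotp v z * v i := by
    simp only [Matrix.mulVec, Matrix.vecMulVec_apply, dotProduct, dotp, Finset.sum_mul]
    exact Finset.sum_congr rfl fun j _ => by ring
  simp [Matrix.add_mulVec, Matrix.one_mulVec, h1, mul_comm]

lemma mcol_mul' {d n : ℕ} (T : Matrix (Fin d) (Fin d) ℝ) (A : Matrix (Fin d) (Fin n) ℝ)
    (j : Fin n) : mcol (T * A) j = T.mulVec (mcol A j) := by
  funext i
  simp [mcol, Matrix.mul_apply, Matrix.mulVec, dotProduct]

lemma norm2_T' {d : ℕ} (v u : Fin d → ℝ) (hv : norm2 v = 1) :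
    norm2 (u + dotp v u • v) = Real.sqrt (norm2 u ^ 2 + 3 * dotp v u ^ 2) := by
  have hv2 : ∑ i, v i ^ 2 = 1 := by rw [← norm2_sq', hv]; norm_num
  unfold norm2
  congr 1
  have expand : ∀ i, (u i + dotp v u * v i) ^ 2
      = u i ^ 2 + 2 * dotp v u * (v i * u i) + dotp v u ^ 2 * v i ^ 2 := by intro i; ring
  simp only [Pi.add_apply, Pi.smul_apply, smul_eq_mul, expand]
  rw [Finset.sum_add_distrib, Finset.sum_add_distrib, ← Finset.mul_sum, ← Finset.mul_sum]
  have hd : ∑ i, v i * u i = dotp v u := rfl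
  rw [hd, hv2, Real.sq_sqrt (by positivity : (0:ℝ) ≤ ∑ i, u i ^ 2)]
  ring

lemma exists_weights' {n : ℕ} {E : Type*} [AddCommGroup E] [Module ℝ E] {f : Fin n → E} {z : E}
    (hz : z ∈ convexHull ℝ (Set.range f)) :
    ∃ w : Fin n → ℝ, (∀ j, 0 ≤ w j) ∧ ∑ j, w j = 1 ∧ ∑ j, w j • f j = z := by
  obtain ⟨ι, _, w, p, hw0, hw1, hp, hsum⟩ := mem_convexHull_iff_exists_fintype.1 hz
  choose g hg using hp
  refine ⟨fun j => ∑ i, if g i = j then w i else 0,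
    fun j => Finset.sum_nonneg fun i _ => ?_, ?_, ?_⟩
  · split
    · exact hw0 i
    · exact le_refl 0
  · dsimp only
    rw [Finset.sum_comm]
    simp only [Finset.sum_ite_eq, Finset.mem_univ, if_true]
    exact hw1
  · dsimp only
    rw [← hsum]
    simp only [Finset.sum_smul]
    rw [Finset.sum_comm]
    refine Finset.sum_congr rfl fun i _ => ?_
    simp only [ite_smul, zero_smul, Finset.sum_ite_eq, Finset.mem_univ, if_true, hg i]

lemma sqrt_ineq' {ε t : ℝ} (hε : 0 < ε) (hε1 : ε ≤ 1) (ht1 : -ε ≤ t) (ht2 : t ≤ 1) :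
    Real.sqrt (1 + 3 * t ^ 2) ≤ 1 + t + 2 * ε := by
  have hpos : (0:ℝ) < 1 + t + 2 * ε := by linarith
  rw [show (1 : ℝ) + t + 2*ε = Real.sqrt ((1 + t + 2*ε)^2) from (Real.sqrt_sq hpos.le).symm]
  apply Real.sqrt_le_sqrt
  nlinarith [mul_nonneg (by linarith : (0:ℝ) ≤ t + ε) (by linarith : (0:ℝ) ≤ 1 - t),
    mul_nonneg hε.le (by linarith : (0:ℝ) ≤ 1 - ε), mul_nonneg hε.le (by linarith : (0:ℝ) ≤ t + ε)]

lemma dotp_sum' {d n : ℕ} (v : Fin d → ℝ) (w : Fin n → ℝ) (u : Fin n → Fin d → ℝ) :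
    dotp v (∑ j, w j • u j) = ∑ j, w j * dotp v (u j) := by
  simp only [dotp, Finset.sum_apply, Pi.smul_apply, smul_eq_mul, Finset.mul_sum]
  rw [Finset.sum_comm]
  exact Finset.sum_congr rfl fun j _ => Finset.sum_congr rfl fun i _ => by ring

lemma mulVec_lin' {d n : ℕ} (T : Matrix (Fin d) (Fin d) ℝ) (q : Fin n → ℝ)
    (u : Fin n → Fin d → ℝ) :
    T.mulVec (∑ j, q j • u j) = ∑ j, q j • T.mulVec (u j) := by
  rw [show T.mulVec (∑ j, q j • u j) = T.mulVecLin (∑ j, q j • u j) from rfl, map_sum]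
  exact Finset.sum_congr rfl fun j _ => by simp [Matrix.mulVecLin_apply]

lemma key_combo' {m n : ℕ} (T : Matrix (Fin m) (Fin m) ℝ) (u u' : Fin n → Fin m → ℝ)
    (c : Fin n → ℝ) (ε : ℝ) (hε : 0 < ε)
    (hTu : ∀ j, T.mulVec (u j) = c j • u' j) (hc1 : ∀ j, 1 ≤ c j)
    (w ν : Fin n → ℝ) (hw0 : ∀ j, 0 ≤ w j) (hν0 : ∀ j, 0 ≤ ν j) (hν1 : ∑ j, ν j = 1)
    (hνsum : ∑ j, ν j • u j = 0) (y : Fin m → ℝ) (hwsum : ∑ j, w j • u j = y)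
    (hS : ∑ j, w j * c j ≤ 1 + 3 * ε) :
    (1 + 3 * ε)⁻¹ • T.mulVec y ∈ convexHull ℝ (Set.range u') := by
  have hε3 : (0:ℝ) < 1 + 3 * ε := by linarith
  set S := ∑ j, w j * c j with hSdef
  set Sν := ∑ j, ν j * c j with hSνdef
  have hSν1 : 1 ≤ Sν := by
    rw [hSνdef, ← hν1]
    exact Finset.sum_le_sum fun j _ => le_mul_of_one_le_right (hν0 j) (hc1 j)
  have hSνpos : 0 < Sν := lt_of_lt_of_le one_pos hSν1
  set α := (1 + 3 * ε - S) / Sν with hα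
  have hα0 : 0 ≤ α := div_nonneg (by linarith) hSνpos.le
  refine mem_convexHull_of_exists_fintype
    (fun j => (w j + α * ν j) * c j / (1 + 3 * ε)) u' (fun j => ?_) ?_
    (fun j => Set.mem_range_self j) ?_
  · have h1 : 0 ≤ w j + α * ν j := add_nonneg (hw0 j) (mul_nonneg hα0 (hν0 j))
    exact div_nonneg (mul_nonneg h1 (le_trans zero_le_one (hc1 j))) hε3.le
  · rw [← Finset.sum_div]
    rw [div_eq_one_iff_eq hε3.ne']
    have expand : ∑ j, (w j + α * ν j) * c j = S + α * Sν := by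
      rw [hSdef, hSνdef, Finset.mul_sum, ← Finset.sum_add_distrib]
      exact Finset.sum_congr rfl fun j _ => by ring
    rw [expand, hα, div_mul_cancel₀ _ hSνpos.ne']
    ring
  · have step1 : ∀ j, ((w j + α * ν j) * c j / (1 + 3 * ε)) • u' j
        = (1 + 3 * ε)⁻¹ • ((w j + α * ν j) • T.mulVec (u j)) := by
      intro j
      rw [hTu j, smul_smul, smul_smul]
      congr 1
      rw [div_eq_inv_mul]
      ring
    simp only [step1]
    rw [← Finset.smul_sum]
    congr 1
    have expand2 : ∑ j, (w j + α * ν j) • T.mulVec (u j)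
        = (∑ j, w j • T.mulVec (u j)) + α • ∑ j, ν j • T.mulVec (u j) := by
      rw [Finset.smul_sum, ← Finset.sum_add_distrib]
      exact Finset.sum_congr rfl fun j _ => by rw [add_smul, smul_smul]
    rw [expand2, ← mulVec_lin', ← mulVec_lin', hwsum, hνsum]
    simp [Matrix.mulVec_zero]

end AuxRescale

/-- Lemma 2.2(i): for `0 < ε ≤ 1/(11 rk(A))`, a unit vector `v` with `â_jᵀ v ≥ -ε` for
all `j`, and `T = I + vvᵀ`, `A' = TA`, 
one has `T·P_A ⊆ (1+3ε)·P_{A'}`. -/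
theorem rescale_PA_subset
    {m n : ℕ} (A : Matrix (Fin m) (Fin n) ℝ) (hcols : ∀ j, mcol A j ≠ 0)
    (ε : ℝ) (hε : 0 < ε) (hεr : ε ≤ 1 / (11 * (A.rank : ℝ)))
    (v : Fin m → ℝ) (hv : norm2 v = 1)
    (hang : ∀ j, -ε ≤ dotp (nml (mcol A j)) v) :
    ∀ z ∈ PA A,
      (1 + vecMulVec v v).mulVec z ∈ (1 + 3 * ε) • PA ((1 + vecMulVec v v) * A) := by
  intro z hz
  have hε1 : ε ≤ 1 := by
    rcases Nat.eq_zero_or_pos A.rank with h | h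
    · rw [h] at hεr; norm_num at hεr; linarith
    · have h1 : (1:ℝ) ≤ (A.rank : ℝ) := by exact_mod_cast h
      have h11 : (0:ℝ) < 11 * (A.rank : ℝ) := by linarith
      calc ε ≤ 1 / (11 * (A.rank : ℝ)) := hεr
        _ ≤ 1 := by rw [div_le_one h11]; linarith
  have hε3 : (0:ℝ) < 1 + 3 * ε := by linarith
  -- notation
  have hun : ∀ j, norm2 (nml (mcol A j)) = 1 := fun j => norm2_nml' (hcols j)
  have hun2 : ∀ j, ∑ i, (nml (mcol A j)) i ^ 2 = 1 := by
    intro j; rw [← norm2_sq', hun j]; norm_num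
  have hv2 : ∑ i, v i ^ 2 = 1 := by rw [← norm2_sq', hv]; norm_num
  set t : Fin n → ℝ := fun j => dotp v (nml (mcol A j)) with htdef
  set c : Fin n → ℝ := fun j => Real.sqrt (1 + 3 * t j ^ 2) with hcdef
  have htlo : ∀ j, -ε ≤ t j := by
    intro j; rw [htdef]; dsimp only; rw [← dotp_comm']; exact hang j
  have hthi : ∀ j, t j ≤ 1 := by
    intro j
    have hcs := Finset.sum_mul_sq_le_sq_mul_sq Finset.univ v (nml (mcol A j))
    rw [hv2, hun2 j] at hcs
    have ht2 : t j ^ 2 ≤ 1 := by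
      rw [htdef]; dsimp only [dotp]; nlinarith [hcs]
    nlinarith [ht2]
  have hc1 : ∀ j, 1 ≤ c j := by
    intro j
    rw [hcdef]; dsimp only
    have h := Real.sqrt_le_sqrt (show (1:ℝ) ≤ 1 + 3 * t j ^ 2 by nlinarith [sq_nonneg (t j)])
    simpa using h
  have hcpos : ∀ j, 0 < c j := fun j => lt_of_lt_of_le one_pos (hc1 j)
  have hcle : ∀ j, c j ≤ 1 + t j + 2 * ε := fun j => sqrt_ineq' hε hε1 (htlo j) (hthi j)
  -- T applied to normalized columns
  set T := (1 : Matrix (Fin m) (Fin m) ℝ) + vecMulVec v v with hTdef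
  have hTu : ∀ j, T.mulVec (nml (mcol A j)) = c j • nml (mcol (T * A) j) := by
    intro j
    have ha := hcols j
    have hval : T.mulVec (nml (mcol A j)) = nml (mcol A j) + t j • v := Tmul' v _
    have hnorm : norm2 (T.mulVec (nml (mcol A j))) = c j := by
      rw [hval, htdef]; dsimp only
      rw [norm2_T' v _ hv, hun j]
      rw [hcdef]; dsimp only [htdef]
      norm_num
      rfl
    have hTa2 : mcol (T * A) j = norm2 (mcol A j) • T.mulVec (nml (mcol A j)) := by
      rw [mcol_mul']
      conv_lhs => rw [← smul_nml' ha]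
      rw [show T.mulVec (norm2 (mcol A j) • nml (mcol A j))
          = T.mulVecLin (norm2 (mcol A j) • nml (mcol A j)) from rfl, LinearMap.map_smul]
      rfl
    have hnorm' : norm2 (mcol (T * A) j) = norm2 (mcol A j) * c j := by
      rw [hTa2, norm2_smul', abs_of_pos (norm2_pos' ha), hnorm]
    have hkey : nml (mcol (T * A) j) = (c j)⁻¹ • T.mulVec (nml (mcol A j)) := by
      rw [nml, hnorm', hTa2, mul_inv, smul_smul]
      congr 1
      rw [mul_comm (norm2 (mcol A j))⁻¹, mul_assoc,
        inv_mul_cancel₀ (norm2_pos' ha).ne', mul_one]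
    rw [hkey, smul_smul, mul_inv_cancel₀ (hcpos j).ne', one_smul]
  -- weights for z and -z
  obtain ⟨lam, hlam0, hlam1, hlamsum⟩ := exists_weights' hz.1
  have hz2 : -z ∈ convexHull ℝ (Set.range fun j => nml (mcol A j)) := by
    have h := hz.2; rwa [Set.mem_neg] at h
  obtain ⟨mu, hmu0, hmu1, hmusum⟩ := exists_weights' hz2
  set ν : Fin n → ℝ := fun j => (lam j + mu j) / 2 with hνdef
  have hν0 : ∀ j, 0 ≤ ν j := fun j => by
    rw [hνdef]; dsimp only; linarith [hlam0 j, hmu0 j]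
  have hν1 : ∑ j, ν j = 1 := by
    rw [hνdef]; dsimp only
    rw [show (∑ j, (lam j + mu j) / 2) = ((∑ j, lam j) + ∑ j, mu j) / 2 by
      rw [← Finset.sum_add_distrib, ← Finset.sum_div], hlam1, hmu1]
    norm_num
  have hνsum : ∑ j, ν j • (nml (mcol A j)) = 0 := by
    rw [hνdef]
    have : ∀ j, ((lam j + mu j) / 2) • (nml (mcol A j))
        = (2:ℝ)⁻¹ • (lam j • (nml (mcol A j)) + mu j • (nml (mcol A j))) := by
      intro j
      rw [smul_add, smul_smul, smul_smul]
      rw [show (lam j + mu j) / 2 = 2⁻¹ * lam j + 2⁻¹ * mu j by ring, add_smul]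
    dsimp only
    simp only [this]
    rw [← Finset.smul_sum, Finset.sum_add_distrib, hlamsum, hmusum]
    simp
  -- dot product bounds
  have hdlam : ∑ j, lam j * t j = dotp v z := by rw [← hlamsum, dotp_sum']
  have hdmu : ∑ j, mu j * t j = dotp v (-z) := by rw [← hmusum, dotp_sum']
  have hnegdot : dotp v (-z) = -dotp v z := by simp [dotp]
  have hlamlow : -ε ≤ ∑ j, lam j * t j := by
    calc -ε = ∑ j, lam j * (-ε) := by rw [← Finset.sum_mul, hlam1, one_mul]
    _ ≤ ∑ j, lam j * t j :=
      Finset.sum_le_sum fun j _ => mul_le_mul_of_nonneg_left (htlo j) (hlam0 j)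
  have hmulow : -ε ≤ ∑ j, mu j * t j := by
    calc -ε = ∑ j, mu j * (-ε) := by rw [← Finset.sum_mul, hmu1, one_mul]
    _ ≤ ∑ j, mu j * t j :=
      Finset.sum_le_sum fun j _ => mul_le_mul_of_nonneg_left (htlo j) (hmu0 j)
  have hdz_le : dotp v z ≤ ε := by
    rw [hdmu, hnegdot] at hmulow; linarith
  have hdnegz_le : dotp v (-z) ≤ ε := by
    rw [hnegdot]; rw [hdlam] at hlamlow; linarith
  -- sum bounds for the c-weighted sums
  have hSbound : ∀ (w : Fin n → ℝ), (∀ j, 0 ≤ w j) → ∑ j, w j = 1 →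
      (∑ j, w j * t j ≤ ε) → ∑ j, w j * c j ≤ 1 + 3 * ε := by
    intro w hw0 hw1 hwt
    calc ∑ j, w j * c j ≤ ∑ j, w j * (1 + t j + 2 * ε) :=
        Finset.sum_le_sum fun j _ => mul_le_mul_of_nonneg_left (hcle j) (hw0 j)
      _ = (∑ j, w j) + (∑ j, w j * t j) + 2 * ε * ∑ j, w j := by
        rw [Finset.mul_sum, ← Finset.sum_add_distrib, ← Finset.sum_add_distrib]
        exact Finset.sum_congr rfl fun j _ => by ring
      _ ≤ 1 + ε + 2 * ε := by rw [hw1]; linarith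
      _ ≤ 1 + 3 * ε := by linarith
  -- main membership
  rw [Set.mem_smul_set_iff_inv_smul_mem₀ hε3.ne']
  constructor
  · have := key_combo' T (fun j => nml (mcol A j)) (fun j => nml (mcol (T * A) j)) c ε hε
      hTu hc1 lam ν hlam0 hν0 hν1 hνsum z hlamsum
      (hSbound lam hlam0 hlam1 (by rw [hdlam]; exact hdz_le))
    exact this
  · rw [Set.mem_neg]
    have hneg : -((1 + 3 * ε)⁻¹ • T.mulVec z) = (1 + 3 * ε)⁻¹ • T.mulVec (-z) := by
      rw [Matrix.mulVec_neg, smul_neg]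
    rw [hneg]
    exact key_combo' T (fun j => nml (mcol A j)) (fun j => nml (mcol (T * A) j)) c ε hε
      hTu hc1 mu ν hmu0 hν0 hν1 hνsum (-z) hmusum
      (hSbound mu hmu0 hmu1 (by rw [hdmu]; exact hdnegz_le))
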